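/- (Conjecture 1 of the paper.) Fix an integer r ≥ 1 and let x, y, s be the sequences produced by the signum algorithm for radius r, and let a_n = x_n + y_n be the Manhattan distance of the n-th path point to the origin. Then the arithmetic mean A(π_n) = (1/(2r)) Σ_{n=0}^{2r−1} 4r/a_n = 2 Σ_{n=0}^{2r−1} 1/a_n of the π-values π_n(r) = 4r/a_n converges to π as r → ∞, the limit being taken over positive integers r tending to infinity. -/

import Mathlib

/-- The cost function `Δ` of the signum algorithm at the point `(x, y)` for radius `r`:
`Δ = |r - √((x-1)² + y²)| - |r - √(x² + (y+1)²)|`. -/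
noncomputable def sigDelta (r : ℕ) (x y : ℤ) : ℝ :=
  |(r : ℝ) - Real.sqrt (((x : ℝ) - 1) ^ 2 + (y : ℝ) ^ 2)| -
    |(r : ℝ) - Real.sqrt ((x : ℝ) ^ 2 + ((y : ℝ) + 1) ^ 2)|

/-- The step sign of the signum algorithm: `s = -1` if `Δ ≤ 0`, and `s = 1` if `Δ > 0`. -/
noncomputable def sigStep (r : ℕ) (x y : ℤ) : ℤ :=
  if sigDelta r x y ≤ 0 then -1 else 1

/-- The points `(x_n, y_n)` of the digital quarter circle of radius `r` produced by the
signum algorithm: `(x₀, y₀) = (r, 0)`, and `(x_{n+1}, y_{n+1}) = (x_n - 1, y_n)` if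
`s_n = -1`, `(x_{n+1}, y_{n+1}) = (x_n, y_n + 1)` if `s_n = 1`. -/
noncomputable def sigPt (r : ℕ) : ℕ → ℤ × ℤ
  | 0 => ((r : ℤ), 0)
  | n + 1 =>
    if sigStep r (sigPt r n).1 (sigPt r n).2 = -1
    then ((sigPt r n).1 - 1, (sigPt r n).2)
    else ((sigPt r n).1, (sigPt r n).2 + 1)

/-- The step sequence `s_n` of the signum algorithm for radius `r`. -/
noncomputable def sigS (r : ℕ) (n : ℕ) : ℤ :=
  sigStep r (sigPt r n).1 (sigPt r n).2

/-- The recursively constructed area under the digital quarter circle: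
`𝒜₀ = 0`, `𝒜_{n+1} = 𝒜_n + x_n` if `s_n = 1`, and `𝒜_{n+1} = 𝒜_n` if `s_n = -1`. -/
noncomputable def sigArea (r : ℕ) : ℕ → ℤ
  | 0 => 0
  | n + 1 =>
    if sigS r n = 1 then sigArea r n + (sigPt r n).1 else sigArea r n

open Filter

namespace SigAux

lemma step_eq_neg_one_iff (r : ℕ) (x y : ℤ) :
    sigStep r x y = -1 ↔ sigDelta r x y ≤ 0 := by
  unfold sigStep; split <;> simp_all

lemma sigPt_succ (r n : ℕ) :
    sigPt r (n + 1) =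
      if sigDelta r (sigPt r n).1 (sigPt r n).2 ≤ 0
      then ((sigPt r n).1 - 1, (sigPt r n).2)
      else ((sigPt r n).1, (sigPt r n).2 + 1) := by
  show (if sigStep r (sigPt r n).1 (sigPt r n).2 = -1 then _ else _) = _
  by_cases h : sigDelta r (sigPt r n).1 (sigPt r n).2 ≤ 0 <;>
    simp [step_eq_neg_one_iff, h]

lemma snd_sub_fst (r : ℕ) : ∀ n : ℕ, (sigPt r n).2 - (sigPt r n).1 = (n : ℤ) - r
  | 0 => by simp [sigPt]
  | n + 1 => by
    have ih := snd_sub_fst r n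
    rw [sigPt_succ]
    split <;> simp <;> push_cast <;> omega

lemma snd_nonneg (r : ℕ) : ∀ n : ℕ, 0 ≤ (sigPt r n).2
  | 0 => by simp [sigPt]
  | n + 1 => by
    have ih := snd_nonneg r n
    rw [sigPt_succ]; split <;> simp <;> omega

lemma fst_le (r : ℕ) : ∀ n : ℕ, (sigPt r n).1 ≤ (r : ℤ)
  | 0 => by simp [sigPt]
  | n + 1 => by
    have ih := fst_le r n
    rw [sigPt_succ]; split <;> simp <;> omega

lemma abs_sub_sqrt_le_one_iff {R K : ℝ} (hR : 1 ≤ R) (hK : 0 ≤ K) :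
    |R - Real.sqrt K| ≤ 1 ↔ (R - 1) ^ 2 ≤ K ∧ K ≤ (R + 1) ^ 2 := by
  rw [abs_le]
  constructor
  · rintro ⟨h1, h2⟩
    have hs := Real.sq_sqrt hK
    have hs0 := Real.sqrt_nonneg K
    constructor
    · nlinarith
    · nlinarith
  · rintro ⟨h1, h2⟩
    have hl : R - 1 ≤ Real.sqrt K := by
      have := Real.sqrt_le_sqrt h1
      rwa [Real.sqrt_sq (by linarith)] at this
    have hu : Real.sqrt K ≤ R + 1 := by
      have := Real.sqrt_le_sqrt h2
      rwa [Real.sqrt_sq (by linarith)] at this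
    constructor <;> linarith

end SigAux

namespace SigAux

lemma abs_le_one_iff_int (r : ℕ) (hr : 1 ≤ r) (K : ℤ) (hK : 0 ≤ K) :
    |(r : ℝ) - Real.sqrt ((K : ℝ))| ≤ 1 ↔
      ((r : ℤ) - 1) ^ 2 ≤ K ∧ K ≤ ((r : ℤ) + 1) ^ 2 := by
  rw [abs_sub_sqrt_le_one_iff (by exact_mod_cast hr) (by exact_mod_cast hK)]
  constructor <;> rintro ⟨h1, h2⟩ <;> exact ⟨by exact_mod_cast h1, by exact_mod_cast h2⟩

set_option maxHeartbeats 1000000 in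
lemma invariant (r : ℕ) (hr : 2 ≤ r) :
    ∀ n : ℕ, n ≤ 2 * r →
      0 ≤ (sigPt r n).1 ∧
      ((r : ℤ) - 1) ^ 2 ≤ (sigPt r n).1 ^ 2 + (sigPt r n).2 ^ 2 ∧
      (sigPt r n).1 ^ 2 + (sigPt r n).2 ^ 2 ≤ ((r : ℤ) + 1) ^ 2
  | 0, _ => by
    have h0 : sigPt r 0 = ((r : ℤ), 0) := rfl
    rw [h0]
    refine ⟨Int.natCast_nonneg r, ?_, ?_⟩ <;> simp <;>
      nlinarith [Int.natCast_nonneg r]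
  | n + 1, hn => by
    obtain ⟨hx0, hlo, hhi⟩ := invariant r hr n (by omega)
    have hy0 : (0 : ℤ) ≤ (sigPt r n).2 := snd_nonneg r n
    have hxr : (sigPt r n).1 ≤ (r : ℤ) := fst_le r n
    have hyx : (sigPt r n).2 - (sigPt r n).1 = (n : ℤ) - r := snd_sub_fst r n
    set x : ℤ := (sigPt r n).1 with hxdef
    set y : ℤ := (sigPt r n).2 with hydef
    have hr1 : (1 : ℕ) ≤ r := by omega
    have castA : ((x : ℝ) - 1) ^ 2 + (y : ℝ) ^ 2 = (((x - 1) ^ 2 + y ^ 2 : ℤ) : ℝ) := by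
      push_cast; ring
    have castB : (x : ℝ) ^ 2 + ((y : ℝ) + 1) ^ 2 = ((x ^ 2 + (y + 1) ^ 2 : ℤ) : ℝ) := by
      push_cast; ring
    have dA_iff : |(r : ℝ) - Real.sqrt (((x : ℝ) - 1) ^ 2 + (y : ℝ) ^ 2)| ≤ 1 ↔
        ((r : ℤ) - 1) ^ 2 ≤ (x - 1) ^ 2 + y ^ 2 ∧ (x - 1) ^ 2 + y ^ 2 ≤ ((r : ℤ) + 1) ^ 2 := by
      rw [castA]; exact abs_le_one_iff_int r hr1 _ (by positivity)
    have dB_iff : |(r : ℝ) - Real.sqrt ((x : ℝ) ^ 2 + ((y : ℝ) + 1) ^ 2)| ≤ 1 ↔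
        ((r : ℤ) - 1) ^ 2 ≤ x ^ 2 + (y + 1) ^ 2 ∧ x ^ 2 + (y + 1) ^ 2 ≤ ((r : ℤ) + 1) ^ 2 := by
      rw [castB]; exact abs_le_one_iff_int r hr1 _ (by positivity)
    have goodB : x ^ 2 + y ^ 2 ≤ (r : ℤ) ^ 2 →
        ((r : ℤ) - 1) ^ 2 ≤ x ^ 2 + (y + 1) ^ 2 ∧ x ^ 2 + (y + 1) ^ 2 ≤ ((r : ℤ) + 1) ^ 2 := by
      intro hD
      have hyr : y ≤ (r : ℤ) := by nlinarith
      constructor <;> nlinarith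
    have hx1 : (r : ℤ) ^ 2 < x ^ 2 + y ^ 2 → 1 ≤ x := by
      intro hD
      rcases lt_or_ge x 1 with hx | hx
      · exfalso
        have hx00 : x = 0 := by omega
        have hyr : y ≤ (r : ℤ) - 1 := by omega
        nlinarith
      · exact hx
    have goodA : (r : ℤ) ^ 2 < x ^ 2 + y ^ 2 →
        ((r : ℤ) - 1) ^ 2 ≤ (x - 1) ^ 2 + y ^ 2 ∧ (x - 1) ^ 2 + y ^ 2 ≤ ((r : ℤ) + 1) ^ 2 := by
      intro hD
      have h1 := hx1 hD
      constructor <;> nlinarith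
    rw [sigPt_succ, ← hxdef, ← hydef]
    by_cases h : sigDelta r x y ≤ 0
    · -- A chosen : move to (x-1, y)
      rw [if_pos h]
      have hΔ : |(r : ℝ) - Real.sqrt (((x : ℝ) - 1) ^ 2 + (y : ℝ) ^ 2)| ≤
          |(r : ℝ) - Real.sqrt ((x : ℝ) ^ 2 + ((y : ℝ) + 1) ^ 2)| := by
        unfold sigDelta at h; linarith
      -- x ≥ 1 : otherwise Δ > 0
      have hxge1 : 1 ≤ x := by
        rcases lt_or_ge x 1 with hx | hx
        · exfalso
          have hx00 : x = 0 := by omega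
          have hy1 : y = (r : ℤ) - 1 := by
            have h1 : y ≤ (r : ℤ) - 1 := by omega
            have h2 : ((r : ℤ) - 1) ^ 2 ≤ y ^ 2 := by
              rw [hx00] at hlo; simpa using hlo
            nlinarith
          apply absurd h
          push_neg
          unfold sigDelta
          have e2 : (x : ℝ) ^ 2 + ((y : ℝ) + 1) ^ 2 = (r : ℝ) ^ 2 := by
            have : (x : ℝ) = 0 := by exact_mod_cast congrArg (Int.cast : ℤ → ℝ) hx00
            have hy' : (y : ℝ) = (r : ℝ) - 1 := by
              rw [hy1]; push_cast; ring
            rw [this, hy']; ring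
          have hrpos : (0 : ℝ) < (r : ℝ) := by positivity
          rw [e2, Real.sqrt_sq hrpos.le, sub_self, abs_zero]
          have e1lt : ((x : ℝ) - 1) ^ 2 + (y : ℝ) ^ 2 < (r : ℝ) ^ 2 := by
            have hx' : (x : ℝ) = 0 := by exact_mod_cast congrArg (Int.cast : ℤ → ℝ) hx00
            have hy' : (y : ℝ) = (r : ℝ) - 1 := by rw [hy1]; push_cast; ring
            rw [hx', hy']
            have : (2 : ℝ) ≤ (r : ℝ) := by exact_mod_cast hr
            nlinarith
          have : Real.sqrt (((x : ℝ) - 1) ^ 2 + (y : ℝ) ^ 2) < (r : ℝ) :=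
            (Real.sqrt_lt' hrpos).mpr e1lt
          rw [abs_of_pos (by linarith)]
          linarith
        · exact hx
      have bounds : ((r : ℤ) - 1) ^ 2 ≤ (x - 1) ^ 2 + y ^ 2 ∧
          (x - 1) ^ 2 + y ^ 2 ≤ ((r : ℤ) + 1) ^ 2 := by
        rcases le_or_gt (x ^ 2 + y ^ 2) ((r : ℤ) ^ 2) with hD | hD
        · exact dA_iff.mp (le_trans hΔ (dB_iff.mpr (goodB hD)))
        · exact goodA hD
      exact ⟨by omega, bounds.1, bounds.2⟩
    · -- B chosen : move to (x, y+1)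
      rw [if_neg h]
      have hΔ : |(r : ℝ) - Real.sqrt ((x : ℝ) ^ 2 + ((y : ℝ) + 1) ^ 2)| ≤
          |(r : ℝ) - Real.sqrt (((x : ℝ) - 1) ^ 2 + (y : ℝ) ^ 2)| := by
        unfold sigDelta at h; push_neg at h; linarith
      have bounds : ((r : ℤ) - 1) ^ 2 ≤ x ^ 2 + (y + 1) ^ 2 ∧
          x ^ 2 + (y + 1) ^ 2 ≤ ((r : ℤ) + 1) ^ 2 := by
        rcases le_or_gt (x ^ 2 + y ^ 2) ((r : ℤ) ^ 2) with hD | hD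
        · exact goodB hD
        · exact dB_iff.mp (le_trans hΔ (dA_iff.mpr (goodA hD)))
      exact ⟨hx0, bounds.1, bounds.2⟩

end SigAux


open Filter

namespace SigAux

noncomputable def sigF (r : ℕ) (t : ℝ) : ℝ := 1 / Real.sqrt (2 * (r : ℝ) ^ 2 - (t - r) ^ 2)

lemma den_ge (r : ℕ) {t : ℝ} (h0 : 0 ≤ t) (h2 : t ≤ 2 * r) :
    (r : ℝ) ^ 2 ≤ 2 * (r : ℝ) ^ 2 - (t - r) ^ 2 := by nlinarith

lemma sigF_nonneg (r : ℕ) (t : ℝ) : 0 ≤ sigF r t := by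
  unfold sigF; positivity

lemma sigF_le (r : ℕ) (hr : 1 ≤ r) {t : ℝ} (h0 : 0 ≤ t) (h2 : t ≤ 2 * r) :
    sigF r t ≤ 1 / r := by
  unfold sigF
  have hrpos : (0 : ℝ) < (r : ℝ) := by exact_mod_cast Nat.pos_of_ne_zero (by omega)
  have h := den_ge r h0 h2
  have : (r : ℝ) ≤ Real.sqrt (2 * (r : ℝ) ^ 2 - (t - r) ^ 2) :=
    (Real.le_sqrt hrpos.le (by nlinarith)).mpr h
  exact one_div_le_one_div_of_le hrpos this

lemma sigF_antitoneOn (r : ℕ) (hr : 1 ≤ r) : AntitoneOn (sigF r) (Set.Icc (0 : ℝ) (r : ℝ)) := by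
  have hrpos : (0 : ℝ) < (r : ℝ) := by exact_mod_cast Nat.pos_of_ne_zero (by omega)
  rintro s ⟨hs0, hsr⟩ t ⟨ht0, htr⟩ hst
  unfold sigF
  have hds : (r : ℝ) ^ 2 ≤ 2 * (r : ℝ) ^ 2 - (s - r) ^ 2 := den_ge r hs0 (by linarith)
  have hle : 2 * (r : ℝ) ^ 2 - (s - r) ^ 2 ≤ 2 * (r : ℝ) ^ 2 - (t - r) ^ 2 := by nlinarith
  exact one_div_le_one_div_of_le (Real.sqrt_pos.mpr (by nlinarith)) (Real.sqrt_le_sqrt hle)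

lemma sigF_monotoneOn (r : ℕ) (hr : 1 ≤ r) :
    MonotoneOn (sigF r) (Set.Icc (r : ℝ) (2 * r : ℝ)) := by
  have hrpos : (0 : ℝ) < (r : ℝ) := by exact_mod_cast Nat.pos_of_ne_zero (by omega)
  rintro s ⟨hsr, hs2⟩ t ⟨htr, ht2⟩ hst
  unfold sigF
  have hdt : (r : ℝ) ^ 2 ≤ 2 * (r : ℝ) ^ 2 - (t - r) ^ 2 := den_ge r (by linarith) ht2
  have hle : 2 * (r : ℝ) ^ 2 - (t - r) ^ 2 ≤ 2 * (r : ℝ) ^ 2 - (s - r) ^ 2 := by nlinarith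
  exact one_div_le_one_div_of_le (Real.sqrt_pos.mpr (by nlinarith)) (Real.sqrt_le_sqrt hle)

lemma sigF_hasDerivAt (r : ℕ) (hr : 1 ≤ r) {t : ℝ} (h0 : 0 ≤ t) (h2 : t ≤ 2 * r) :
    HasDerivAt (fun u : ℝ => Real.arcsin ((u - r) / (r * Real.sqrt 2))) (sigF r t) t := by
  have hrpos : (0 : ℝ) < (r : ℝ) := by exact_mod_cast Nat.pos_of_ne_zero (by omega)
  have hs2 : (0 : ℝ) < Real.sqrt 2 := Real.sqrt_pos.mpr (by norm_num)
  have hden : (0 : ℝ) < (r : ℝ) * Real.sqrt 2 := by positivity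
  set u : ℝ := (t - r) / (r * Real.sqrt 2) with hu
  have hu2 : u ^ 2 ≤ 1 / 2 := by
    rw [hu, div_pow, mul_pow, Real.sq_sqrt (by norm_num : (0:ℝ) ≤ 2)]
    rw [div_le_div_iff₀ (by positivity) (by norm_num)]
    nlinarith
  have h1 : u ≠ -1 := by intro h; rw [h] at hu2; norm_num at hu2
  have h2' : u ≠ 1 := by intro h; rw [h] at hu2; norm_num at hu2
  have hinner : HasDerivAt (fun v : ℝ => (v - r) / (r * Real.sqrt 2))
      (1 / (r * Real.sqrt 2)) t := by
    simpa using ((hasDerivAt_id t).sub_const (r : ℝ)).div_const ((r : ℝ) * Real.sqrt 2)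
  have hcomp := (Real.hasDerivAt_arcsin h1 h2').comp t hinner
  refine hcomp.congr_deriv ?_
  symm
  unfold sigF
  rw [div_mul_div_comm, one_mul]
  congr 1
  rw [← Real.sqrt_mul_self (by positivity : (0:ℝ) ≤ (r:ℝ) * Real.sqrt 2)]
  rw [← Real.sqrt_mul (by nlinarith [Real.sq_sqrt (by norm_num : (0:ℝ) ≤ 2), Real.sqrt_nonneg 2, hu2] : (0:ℝ) ≤ 1 - u ^ 2)]
  congr 1
  have : ((r : ℝ) * Real.sqrt 2) * ((r : ℝ) * Real.sqrt 2) = 2 * (r : ℝ) ^ 2 := by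
    have := Real.mul_self_sqrt (by norm_num : (0:ℝ) ≤ 2)
    ring_nf
    nlinarith [Real.sq_sqrt (by norm_num : (0:ℝ) ≤ 2)]
  rw [hu]
  field_simp
  nlinarith [Real.sq_sqrt (by norm_num : (0:ℝ) ≤ 2)]

lemma arcsin_inv_sqrt_two : Real.arcsin (1 / Real.sqrt 2) = Real.pi / 4 := by
  have h2 : Real.sqrt 2 > 0 := Real.sqrt_pos.mpr (by norm_num)
  have : (1 : ℝ) / Real.sqrt 2 = Real.sqrt 2 / 2 := by
    rw [div_eq_div_iff (by positivity) (by norm_num)]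
    nlinarith [Real.sq_sqrt (by norm_num : (0:ℝ) ≤ 2)]
  rw [this, ← Real.sin_pi_div_four]
  exact Real.arcsin_sin (by linarith [Real.pi_pos]) (by linarith [Real.pi_pos])

lemma sigF_integral (r : ℕ) (hr : 1 ≤ r) {a b : ℝ} (hab : a ≤ b) (h0 : 0 ≤ a) (h2 : b ≤ 2 * r)
    (hint : IntervalIntegrable (sigF r) MeasureTheory.volume a b) :
    ∫ t in a..b, sigF r t =
      Real.arcsin ((b - r) / (r * Real.sqrt 2)) - Real.arcsin ((a - r) / (r * Real.sqrt 2)) := by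
  have key : ∀ t ∈ Set.uIcc a b,
      HasDerivAt (fun u : ℝ => Real.arcsin ((u - r) / (r * Real.sqrt 2))) (sigF r t) t := by
    intro t ht
    rw [Set.uIcc_of_le hab] at ht
    exact sigF_hasDerivAt r hr (by linarith [ht.1]) (by linarith [ht.2])
  exact intervalIntegral.integral_eq_sub_of_hasDerivAt key hint

end SigAux

namespace SigAux

lemma riemann (r : ℕ) (hr : 1 ≤ r) :
    |(∑ n ∈ Finset.range (2 * r), sigF r (n : ℝ)) - Real.pi / 2| ≤ 2 / r := by
  have hrpos : (0 : ℝ) < (r : ℝ) := by exact_mod_cast Nat.pos_of_ne_zero (by omega)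
  have hr2 : (r : ℝ) ≤ 2 * r := by linarith
  -- monotonicity hypotheses in the shape expected by the sum/integral comparison lemmas
  have hAnti' : AntitoneOn (sigF r) (Set.Icc (0 : ℝ) (0 + (r : ℝ))) := by
    simpa using sigF_antitoneOn r hr
  have hMono' : MonotoneOn (sigF r) (Set.Icc ((r : ℝ)) ((r : ℝ) + (r : ℝ))) := by
    have := sigF_monotoneOn r hr
    rw [two_mul] at this
    exact this
  have i1 : IntervalIntegrable (sigF r) MeasureTheory.volume 0 (r : ℝ) := by
    apply AntitoneOn.intervalIntegrable
    rw [Set.uIcc_of_le hrpos.le]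
    exact sigF_antitoneOn r hr
  have i2 : IntervalIntegrable (sigF r) MeasureTheory.volume (r : ℝ) ((r : ℝ) + (r : ℝ)) := by
    apply MonotoneOn.intervalIntegrable
    rw [Set.uIcc_of_le (by linarith)]
    exact hMono'
  have harcsin0 : Real.arcsin (((r : ℝ) - r) / (r * Real.sqrt 2)) = 0 := by
    simp
  have hs2 : (0 : ℝ) < Real.sqrt 2 := Real.sqrt_pos.mpr (by norm_num)
  have I1 : ∫ t in (0 : ℝ)..(r : ℝ), sigF r t = Real.pi / 4 := by
    rw [sigF_integral r hr hrpos.le le_rfl hr2 i1, harcsin0]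
    have : ((0 : ℝ) - r) / (r * Real.sqrt 2) = -(1 / Real.sqrt 2) := by
      field_simp
      ring
    rw [this, Real.arcsin_neg, arcsin_inv_sqrt_two]
    ring
  have I2 : ∫ t in (r : ℝ)..((r : ℝ) + (r : ℝ)), sigF r t = Real.pi / 4 := by
    rw [sigF_integral r hr (by linarith) hrpos.le (by linarith) i2, harcsin0]
    have : ((r : ℝ) + (r : ℝ) - r) / (r * Real.sqrt 2) = 1 / Real.sqrt 2 := by
      field_simp
      ring
    rw [this, arcsin_inv_sqrt_two]
    ring
  set S1 : ℝ := ∑ i ∈ Finset.range r, sigF r (i : ℝ) with hS1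
  set S2 : ℝ := ∑ i ∈ Finset.range r, sigF r ((r : ℝ) + (i : ℝ)) with hS2
  -- bounds for S1
  have L1 : Real.pi / 4 ≤ S1 := by
    have h := hAnti'.integral_le_sum
    simp only [zero_add] at h
    rw [I1] at h
    exact h
  have U1 : S1 ≤ Real.pi / 4 + 1 / r := by
    have h := hAnti'.sum_le_integral
    simp only [zero_add] at h
    rw [I1] at h
    -- h : ∑ i in range r, sigF r ↑(i+1) ≤ π/4
    have shift : S1 + sigF r (r : ℝ) =
        sigF r (0 : ℝ) + ∑ i ∈ Finset.range r, sigF r ((i : ℕ) + 1 : ℕ) := by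
      have e1 := Finset.sum_range_succ (fun i : ℕ => sigF r (i : ℝ)) r
      have e2 := Finset.sum_range_succ' (fun i : ℕ => sigF r (i : ℝ)) r
      rw [e2] at e1
      push_cast at e1 ⊢
      linarith [e1]
    have hf0 : sigF r (0 : ℝ) ≤ 1 / r := sigF_le r hr le_rfl (by linarith)
    have hfr : 0 ≤ sigF r (r : ℝ) := sigF_nonneg r _
    push_cast at shift h
    linarith
  -- bounds for S2
  have U2 : S2 ≤ Real.pi / 4 := by
    have h := hMono'.sum_le_integral
    rw [I2] at h
    exact h
  have L2 : Real.pi / 4 ≤ S2 + 1 / r := by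
    have h := hMono'.integral_le_sum
    rw [I2] at h
    -- h : π/4 ≤ ∑ i in range r, sigF r (r + ↑(i+1))
    have shift : (∑ i ∈ Finset.range r, sigF r ((r : ℝ) + ((i : ℕ) + 1 : ℕ))) + sigF r ((r : ℝ) + 0) =
        S2 + sigF r ((r : ℝ) + r) := by
      have e1 := Finset.sum_range_succ (fun i : ℕ => sigF r ((r : ℝ) + (i : ℝ))) r
      have e2 := Finset.sum_range_succ' (fun i : ℕ => sigF r ((r : ℝ) + (i : ℝ))) r
      rw [e2] at e1
      push_cast at e1 ⊢
      linarith [e1]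
    have hf2r : sigF r ((r : ℝ) + r) ≤ 1 / r := by
      have := sigF_le r hr (t := (r : ℝ) + r) (by linarith) (by linarith)
      exact this
    have hf0 : 0 ≤ sigF r ((r : ℝ) + 0) := sigF_nonneg r _
    push_cast at shift h
    linarith
  -- split the full sum
  have split : (∑ n ∈ Finset.range (2 * r), sigF r (n : ℝ)) = S1 + S2 := by
    rw [two_mul, Finset.sum_range_add]
    congr 1
    apply Finset.sum_congr rfl
    intro i _
    push_cast
    ring_nf
  have h12 : (1 : ℝ) / r + 1 / r = 2 / r := by ring
  rw [split, abs_le]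
  constructor <;> linarith

end SigAux


namespace SigAux

set_option maxHeartbeats 1000000 in
lemma term_bound (r : ℕ) (hr : 4 ≤ r) (n : ℕ) (hn : n < 2 * r) :
    |1 / (((sigPt r n).1 + (sigPt r n).2 : ℤ) : ℝ) - sigF r (n : ℝ)| ≤
      6 / (((r : ℝ) - 3) * r) := by
  obtain ⟨hx0, hlo, hhi⟩ := invariant r (by omega) n (by omega)
  have hy0 : (0 : ℤ) ≤ (sigPt r n).2 := snd_nonneg r n
  have hyx : (sigPt r n).2 - (sigPt r n).1 = (n : ℤ) - r := snd_sub_fst r n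
  set x : ℤ := (sigPt r n).1
  set y : ℤ := (sigPt r n).2
  have hxy : x - y = (r : ℤ) - n := by omega
  have ha2 : (x + y) ^ 2 = 2 * (x ^ 2 + y ^ 2) - ((r : ℤ) - n) ^ 2 := by
    rw [← hxy]; ring
  have hrnsq : ((r : ℤ) - n) ^ 2 ≤ (r : ℤ) ^ 2 := by
    have h1 : (0 : ℤ) ≤ n := Int.natCast_nonneg n
    have h2 : (n : ℤ) ≤ 2 * r := by exact_mod_cast Nat.cast_le.mpr (le_of_lt hn)
    nlinarith
  set A : ℝ := ((x + y : ℤ) : ℝ) with hAdef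
  set W : ℝ := 2 * (r : ℝ) ^ 2 - ((n : ℝ) - r) ^ 2 with hWdef
  have hrR : (4 : ℝ) ≤ (r : ℝ) := by exact_mod_cast hr
  have hA0 : (0 : ℝ) ≤ A := by rw [hAdef]; exact_mod_cast add_nonneg hx0 hy0
  have hA2 : A ^ 2 = 2 * ((x ^ 2 + y ^ 2 : ℤ) : ℝ) - ((r : ℝ) - n) ^ 2 := by
    rw [hAdef]
    rw [show ((x + y : ℤ) : ℝ) ^ 2 = (((x + y) ^ 2 : ℤ) : ℝ) by push_cast; ring, ha2]
    push_cast; ring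
  have hDlo : (((r : ℤ) - 1) ^ 2 : ℝ) ≤ ((x ^ 2 + y ^ 2 : ℤ) : ℝ) := by exact_mod_cast hlo
  have hDhi : ((x ^ 2 + y ^ 2 : ℤ) : ℝ) ≤ (((r : ℤ) + 1) ^ 2 : ℝ) := by exact_mod_cast hhi
  have hcastr : (((r : ℤ) - 1) ^ 2 : ℝ) = ((r : ℝ) - 1) ^ 2 := by push_cast; ring
  have hcastr2 : (((r : ℤ) + 1) ^ 2 : ℝ) = ((r : ℝ) + 1) ^ 2 := by push_cast; ring
  rw [hcastr] at hDlo
  rw [hcastr2] at hDhi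
  have hrn2 : ((r : ℝ) - n) ^ 2 ≤ (r : ℝ) ^ 2 := by
    have : (((r : ℤ) - n) ^ 2 : ℝ) ≤ (((r : ℤ) ^ 2 : ℤ) : ℝ) := by exact_mod_cast hrnsq
    push_cast at this
    convert this using 2
  have hWsame : ((n : ℝ) - r) ^ 2 = ((r : ℝ) - n) ^ 2 := by ring
  have hAW : |A ^ 2 - W| ≤ 6 * r := by
    rw [hWdef, hA2, hWsame, abs_le]
    constructor <;> nlinarith
  have hAlow : (r : ℝ) - 3 ≤ A := by
    have hA2lo : ((r : ℝ) - 3) ^ 2 ≤ A ^ 2 := by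
      rw [hA2]
      nlinarith
    nlinarith
  have hApos : (0 : ℝ) < A := by linarith
  have hWpos : (r : ℝ) ^ 2 ≤ W := by
    rw [hWdef]
    exact den_ge r (Nat.cast_nonneg n) (by exact_mod_cast Nat.cast_le.mpr (le_of_lt hn))
  have hrpos : (0 : ℝ) < (r : ℝ) := by linarith
  set sw : ℝ := Real.sqrt W with hswdef
  have hsw : (r : ℝ) ≤ sw := (Real.le_sqrt hrpos.le (by nlinarith)).mpr hWpos
  have hswpos : (0 : ℝ) < sw := by linarith
  have hswsq : sw ^ 2 = W := Real.sq_sqrt (by nlinarith)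
  have hdiff : |A - sw| ≤ 6 := by
    have habs : |A - sw| * (A + sw) = |A ^ 2 - W| := by
      rw [← hswsq, show A ^ 2 - sw ^ 2 = (A - sw) * (A + sw) by ring, abs_mul,
        abs_of_nonneg (by linarith : (0 : ℝ) ≤ A + sw)]
    nlinarith [abs_nonneg (A - sw), habs, hAW]
  have hfn : sigF r (n : ℝ) = 1 / sw := by rw [hswdef, hWdef]; rfl
  rw [hfn]
  have heq : 1 / A - 1 / sw = (sw - A) / (A * sw) := by
    field_simp
  rw [show |1 / (((sigPt r n).1 + (sigPt r n).2 : ℤ) : ℝ) - 1 / sw| = |1 / A - 1 / sw| from rfl,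
    heq, abs_div, abs_of_pos (by positivity : (0 : ℝ) < A * sw)]
  have h6 : |sw - A| ≤ 6 := by rw [abs_sub_comm]; exact hdiff
  have hden : ((r : ℝ) - 3) * r ≤ A * sw := by nlinarith
  exact div_le_div₀ (by norm_num) h6 (by nlinarith) hden


end SigAux

set_option maxHeartbeats 1000000 in
/-- Conjecture 1 of the paper: the arithmetic mean
`A(π_n) = (1/(2r)) Σ_{n=0}^{2r-1} 4r/a_n = 2 Σ_{n=0}^{2r-1} 1/a_n` of the π-values
`π_n(r) = 4r/a_n`, where `a_n = x_n + y_n` is the Manhattan distance of the `n`-th point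
of the digital quarter circle of radius `r` to the origin, converges to `π` as the
positive integer `r` tends to infinity. -/
theorem sig_arithmetic_mean_tendsto_pi :
    Tendsto
      (fun r : ℕ => 2 * ∑ n ∈ Finset.range (2 * r),
        1 / (((sigPt r n).1 + (sigPt r n).2 : ℤ) : ℝ))
      atTop (nhds Real.pi) := by
  set T : ℕ → ℝ := fun r => 2 * ∑ n ∈ Finset.range (2 * r),
    1 / (((sigPt r n).1 + (sigPt r n).2 : ℤ) : ℝ) with hT
  set E : ℕ → ℝ := fun r => 24 / ((r : ℝ) - 3) + 4 / r with hE
  have key : ∀ r : ℕ, 4 ≤ r → |T r - Real.pi| ≤ E r := by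
    intro r hr
    have hrR : (4 : ℝ) ≤ (r : ℝ) := by exact_mod_cast hr
    have hrpos : (0 : ℝ) < (r : ℝ) := by linarith
    have h1 : |(∑ n ∈ Finset.range (2 * r), 1 / (((sigPt r n).1 + (sigPt r n).2 : ℤ) : ℝ)) -
        ∑ n ∈ Finset.range (2 * r), SigAux.sigF r (n : ℝ)| ≤ 12 / ((r : ℝ) - 3) := by
      rw [← Finset.sum_sub_distrib]
      calc |∑ n ∈ Finset.range (2 * r),
            (1 / (((sigPt r n).1 + (sigPt r n).2 : ℤ) : ℝ) - SigAux.sigF r (n : ℝ))|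
          ≤ ∑ n ∈ Finset.range (2 * r),
            |1 / (((sigPt r n).1 + (sigPt r n).2 : ℤ) : ℝ) - SigAux.sigF r (n : ℝ)| :=
            Finset.abs_sum_le_sum_abs _ _
        _ ≤ ∑ _n ∈ Finset.range (2 * r), 6 / (((r : ℝ) - 3) * r) := by
            apply Finset.sum_le_sum
            intro n hn
            exact SigAux.term_bound r hr n (Finset.mem_range.mp hn)
        _ = (2 * r : ℕ) * (6 / (((r : ℝ) - 3) * r)) := by
            rw [Finset.sum_const, Finset.card_range, nsmul_eq_mul]
        _ = 12 / ((r : ℝ) - 3) := by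
            have hr3 : (r : ℝ) - 3 ≠ 0 := by linarith
            have hr0 : (r : ℝ) ≠ 0 := by linarith
            push_cast
            field_simp
            ring
    have h2 := SigAux.riemann r (by omega)
    have habs : |T r - Real.pi| ≤ 2 * (12 / ((r : ℝ) - 3)) + 2 * (2 / r) := by
      have : T r - Real.pi =
          2 * ((∑ n ∈ Finset.range (2 * r), 1 / (((sigPt r n).1 + (sigPt r n).2 : ℤ) : ℝ)) -
            ∑ n ∈ Finset.range (2 * r), SigAux.sigF r (n : ℝ)) +
          2 * ((∑ n ∈ Finset.range (2 * r), SigAux.sigF r (n : ℝ)) - Real.pi / 2) := by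
        rw [hT]; ring
      rw [this]
      calc |_ + _| ≤ |2 * ((∑ n ∈ Finset.range (2 * r), 1 / (((sigPt r n).1 + (sigPt r n).2 : ℤ) : ℝ)) -
            ∑ n ∈ Finset.range (2 * r), SigAux.sigF r (n : ℝ))| +
            |2 * ((∑ n ∈ Finset.range (2 * r), SigAux.sigF r (n : ℝ)) - Real.pi / 2)| := abs_add_le _ _
        _ ≤ 2 * (12 / ((r : ℝ) - 3)) + 2 * (2 / r) := by
            rw [abs_mul, abs_mul, abs_of_nonneg (by norm_num : (0:ℝ) ≤ 2)]
            have h2' := h2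
            nlinarith [h1, h2']
    have heq' : E r = 2 * (12 / ((r : ℝ) - 3)) + 2 * (2 / r) := by
      rw [hE]; ring
    exact le_of_le_of_eq habs heq'.symm
  have hE0 : Tendsto E atTop (nhds 0) := by
    have hsub : Tendsto (fun r : ℕ => (r : ℝ) - 3) atTop atTop := by
      apply Filter.tendsto_atTop_add_const_right
      exact tendsto_natCast_atTop_atTop
    have t1 : Tendsto (fun r : ℕ => 24 / ((r : ℝ) - 3)) atTop (nhds 0) :=
      Tendsto.div_atTop tendsto_const_nhds hsub
    have t2 : Tendsto (fun r : ℕ => 4 / (r : ℝ)) atTop (nhds 0) :=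
      Tendsto.div_atTop tendsto_const_nhds tendsto_natCast_atTop_atTop
    have := t1.add t2
    simpa using this
  have hlow : Tendsto (fun r : ℕ => Real.pi - E r) atTop (nhds Real.pi) := by
    have := (tendsto_const_nhds : Tendsto (fun _ : ℕ => Real.pi) atTop (nhds Real.pi)).sub hE0
    simpa using this
  have hhigh : Tendsto (fun r : ℕ => Real.pi + E r) atTop (nhds Real.pi) := by
    have := (tendsto_const_nhds : Tendsto (fun _ : ℕ => Real.pi) atTop (nhds Real.pi)).add hE0
    simpa using this
  apply tendsto_of_tendsto_of_tendsto_of_le_of_le' hlow hhigh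
  · filter_upwards [eventually_ge_atTop 4] with r hr
    have := key r hr
    rw [abs_le] at this
    linarith [this.1]
  · filter_upwards [eventually_ge_atTop 4] with r hr
    have := key r hr
    rw [abs_le] at this
    linarith [this.2]
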